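/- Let S = σ(H) + σ(H') where σ(H) = {E_n} and σ(H') = {E'_m} are the spectra of two Hamiltonians, and let p, p' be positive functions on σ(H), σ(H') respectively such that p(E_n)/p(E_m) = p'(E'_s)/p'(E'_r) whenever E_n - E_m = E'_s - E'_r. Fix E₀ ∈ σ(H) and E'_r ∈ σ(H'). Then the function Φ on (σ(H) - E₀) + (σ(H') - E'_r) defined by Φ(E - E₀ + E' - E'_r) = p(E)p'(E')/(p(E₀)p'(E'_r)) is well-defined and satisfies Φ(x + y) = Φ(x)Φ(y) for all x ∈ σ(H) - E₀, y ∈ σ(H') - E'_r. -/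

import Mathlib

/-- Lemma 6 of the paper: if equal energy gaps give equal population ratios, then the
function `Φ` relating populations of sums of shifted energies is well defined and
satisfies the Cauchy functional equation. -/
theorem phi_well_defined_and_multiplicative
    (S S' : Set ℝ) (p p' : ℝ → ℝ)
    (hp : ∀ E ∈ S, 0 < p E) (hp' : ∀ E' ∈ S', 0 < p' E')
    (hgaps : ∀ En ∈ S, ∀ Em ∈ S, ∀ Es ∈ S', ∀ Er ∈ S',
      En - Em = Es - Er → p En / p Em = p' Es / p' Er)
    (E₀ : ℝ) (hE₀ : E₀ ∈ S) (Er : ℝ) (hEr : Er ∈ S') :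
    ∃ Φ : ℝ → ℝ,
      (∀ E ∈ S, ∀ E' ∈ S',
        Φ ((E - E₀) + (E' - Er)) = p E * p' E' / (p E₀ * p' Er)) ∧
      (∀ E ∈ S, ∀ E' ∈ S',
        Φ ((E - E₀) + (E' - Er)) = Φ (E - E₀) * Φ (E' - Er)) := by
  classical
  have key : ∀ E ∈ S, ∀ F ∈ S, ∀ E' ∈ S', ∀ F' ∈ S',
      (E - E₀) + (E' - Er) = (F - E₀) + (F' - Er) →
      p E * p' E' = p F * p' F' := by
    intro E hE F hF E' hE' F' hF' h
    have h2 : E - F = F' - E' := by linarith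
    have hd := hgaps E hE F hF F' hF' E' hE' h2
    have hF0 : p F ≠ 0 := (hp F hF).ne'
    have hE'0 : p' E' ≠ 0 := (hp' E' hE').ne'
    rw [div_eq_div_iff hF0 hE'0] at hd
    linarith
  set Φ : ℝ → ℝ := fun x =>
    if h : ∃ E, E ∈ S ∧ ∃ E', E' ∈ S' ∧ (E - E₀) + (E' - Er) = x then
      p h.choose * p' h.choose_spec.2.choose / (p E₀ * p' Er)
    else 1 with hΦdef
  have hΦ : ∀ E ∈ S, ∀ E' ∈ S',
      Φ ((E - E₀) + (E' - Er)) = p E * p' E' / (p E₀ * p' Er) := by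
    intro E hE E' hE'
    have hex : ∃ F, F ∈ S ∧ ∃ F', F' ∈ S' ∧ (F - E₀) + (F' - Er) = (E - E₀) + (E' - Er) :=
      ⟨E, hE, E', hE', rfl⟩
    simp only [hΦdef, dif_pos hex]
    have hF := hex.choose_spec.1
    have hF' := hex.choose_spec.2.choose_spec.1
    have heq := hex.choose_spec.2.choose_spec.2
    rw [key _ hF _ hE _ hF' _ hE' heq]
  refine ⟨Φ, hΦ, ?_⟩
  intro E hE E' hE'
  have h1 : Φ (E - E₀) = p E * p' Er / (p E₀ * p' Er) := by
    have := hΦ E hE Er hEr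
    simpa using this
  have h2 : Φ (E' - Er) = p E₀ * p' E' / (p E₀ * p' Er) := by
    have := hΦ E₀ hE₀ E' hE'
    simpa using this
  rw [hΦ E hE E' hE', h1, h2]
  have h0 : p E₀ ≠ 0 := (hp E₀ hE₀).ne'
  have hr : p' Er ≠ 0 := (hp' Er hEr).ne'
  field_simp
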